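/- arXiv:2305.03861 — 2 statements merged into one kernel-verified Lean document; each statement's English description precedes it below -/
import Mathlib

section
/- Let n ≥ 3 and let λ₁, …, λₙ be real numbers with λ₁ + ⋯ + λₙ = 0. Then (Σᵢ λᵢ³)² ≤ ((n − 2)²/(n(n − 1))) · (Σᵢ λᵢ²)³, with equality if and only if at least n − 1 of the numbers λ₁, …, λₙ are equal to one another. -/
open Finset

/-- The `k`-th elementary symmetric polynomial of `lam 0, …, lam (n-1)`. -/
noncomputable def esymm {n : ℕ} (k : ℕ) (lam : Fin n → ℝ) : ℝ :=
  ∑ s ∈ (Finset.univ : Finset (Fin n)).powersetCard k, ∏ i ∈ s, lam i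

/-- The normalized elementary symmetric function `p k = σ k / C(n,k)`. -/
noncomputable def p {n : ℕ} (k : ℕ) (lam : Fin n → ℝ) : ℝ :=
  esymm k lam / (n.choose k)

lemma coord_sq_le {n : ℕ} (hn : 3 ≤ n) (lam : Fin n → ℝ)
    (hsum : ∑ i, lam i = 0) (i : Fin n) :
    (n : ℝ) * lam i ^ 2 ≤ ((n : ℝ) - 1) * ∑ j, lam j ^ 2 := by
  have h1 : lam i + ∑ j ∈ univ.erase i, lam j = 0 := by
    rw [Finset.add_sum_erase univ lam (mem_univ i)]; exact hsum
  have h2 : lam i ^ 2 + ∑ j ∈ univ.erase i, lam j ^ 2 = ∑ j, lam j ^ 2 := by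
    rw [Finset.add_sum_erase univ (fun j => lam j ^ 2) (mem_univ i)]
  have hcs := sq_sum_le_card_mul_sum_sq (s := univ.erase i) (f := lam)
  have hcard : ((univ.erase i).card : ℝ) = (n : ℝ) - 1 := by
    rw [Finset.card_erase_of_mem (mem_univ i), Finset.card_univ, Fintype.card_fin,
      Nat.cast_sub (by omega), Nat.cast_one]
  rw [hcard] at hcs
  have h3 : (∑ j ∈ univ.erase i, lam j) = - lam i := by linarith
  rw [h3] at hcs
  nlinarith [hcs, h2]

lemma key_identity {n : ℕ} (hn : 3 ≤ n) (lam : Fin n → ℝ)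
    (hsum : ∑ i, lam i = 0) (a : ℝ)
    (ha2 : a ^ 2 * ((n : ℝ) * ((n : ℝ) - 1)) = ∑ i, lam i ^ 2) :
    ∑ i, (lam i - a) ^ 2 * (lam i + ((n : ℝ) - 1) * a)
      = (∑ i, lam i ^ 3) + ((n : ℝ) - 2) * a * ∑ i, lam i ^ 2 := by
  have h1 : ∀ i ∈ (univ : Finset (Fin n)), (lam i - a) ^ 2 * (lam i + ((n : ℝ) - 1) * a)
      = lam i ^ 3 + ((n : ℝ) - 3) * a * lam i ^ 2
        - (2 * (n : ℝ) - 3) * a ^ 2 * lam i + ((n : ℝ) - 1) * a ^ 3 := by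
    intro i _; ring
  rw [Finset.sum_congr rfl h1]
  simp only [Finset.sum_add_distrib, Finset.sum_sub_distrib, ← Finset.mul_sum,
    Finset.sum_const, Finset.card_univ, Fintype.card_fin, nsmul_eq_mul, hsum]
  linear_combination a * ha2

lemma key_nonneg {n : ℕ} (hn : 3 ≤ n) (lam : Fin n → ℝ)
    (hsum : ∑ i, lam i = 0) (a : ℝ) (ha : 0 ≤ a)
    (ha2 : a ^ 2 * ((n : ℝ) * ((n : ℝ) - 1)) = ∑ i, lam i ^ 2) (i : Fin n) :
    0 ≤ (lam i - a) ^ 2 * (lam i + ((n : ℝ) - 1) * a) := by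
  have hc := coord_sq_le hn lam hsum i
  have hn' : (3 : ℝ) ≤ (n : ℝ) := by exact_mod_cast hn
  have hpos : 0 ≤ lam i + ((n : ℝ) - 1) * a := by
    by_contra h
    push_neg at h
    have h2 : ((n:ℝ)-1)*a < -lam i := by linarith
    have h3 : (((n:ℝ)-1)*a)^2 < (-lam i)^2 :=
      pow_lt_pow_left₀ h2 (mul_nonneg (by linarith) ha) (by norm_num)
    nlinarith [hc, ha2, h3]
  positivity

lemma count_lemma {n : ℕ} (hn : 3 ≤ n) (lam : Fin n → ℝ)
    (hsum : ∑ i, lam i = 0) (a : ℝ)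
    (h : ∀ i, lam i = a ∨ lam i = -((n : ℝ) - 1) * a) :
    ∃ c : ℝ, n - 1 ≤ (Finset.univ.filter fun i => lam i = c).card := by
  have hn' : (3 : ℝ) ≤ (n : ℝ) := by exact_mod_cast hn
  by_cases ha : a = 0
  · refine ⟨0, ?_⟩
    have hall : ∀ i, lam i = 0 := by
      intro i; rcases h i with h' | h' <;> simp [ha] at h' <;> exact h'
    have : (Finset.univ.filter fun i => lam i = (0:ℝ)) = univ := by
      apply Finset.filter_true_of_mem; intro i _; exact hall i
    rw [this, Finset.card_univ, Fintype.card_fin]; omega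
  · refine ⟨a, ?_⟩
    set T := (Finset.univ.filter fun i => lam i = -((n : ℝ) - 1) * a) with hT
    set T' := (Finset.univ.filter fun i => ¬ lam i = -((n : ℝ) - 1) * a) with hT'
    have hsplit : ∑ i ∈ T, lam i + ∑ i ∈ T', lam i = ∑ i, lam i :=
      Finset.sum_filter_add_sum_filter_not univ _ lam
    have hcardsplit : T.card + T'.card = n := by
      rw [hT, hT', Finset.card_filter_add_card_filter_not, Finset.card_univ,
        Fintype.card_fin]
    have hTsum : ∑ i ∈ T, lam i = (T.card : ℝ) * (-((n : ℝ) - 1) * a) := by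
      rw [Finset.sum_congr rfl (fun i hi => (Finset.mem_filter.mp hi).2),
        Finset.sum_const, nsmul_eq_mul]
    have hT'sum : ∑ i ∈ T', lam i = (T'.card : ℝ) * a := by
      rw [Finset.sum_congr rfl (fun i hi => ((h i).resolve_right (Finset.mem_filter.mp hi).2)),
        Finset.sum_const, nsmul_eq_mul]
    rw [hTsum, hT'sum, hsum] at hsplit
    have hcast : (T.card : ℝ) + (T'.card : ℝ) = (n : ℝ) := by exact_mod_cast hcardsplit
    have h0 : a * ((n : ℝ) - (T.card : ℝ) * (n : ℝ)) = 0 := by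
      linear_combination hsplit - a * hcast
    have hk : (T.card : ℝ) * (n : ℝ) = (n : ℝ) := by
      rcases mul_eq_zero.mp h0 with h' | h'
      · exact absurd h' ha
      · linarith
    have hk1 : (T.card : ℝ) = 1 := by
      have h1 : ((T.card : ℝ) - 1) * (n : ℝ) = 0 := by linarith
      rcases mul_eq_zero.mp h1 with h' | h'
      · linarith
      · linarith
    have hk1' : T.card = 1 := by exact_mod_cast hk1
    have hsub : T' ⊆ Finset.univ.filter fun i => lam i = a := by
      intro i hi
      exact Finset.mem_filter.mpr ⟨Finset.mem_univ i,
        (h i).resolve_right (Finset.mem_filter.mp hi).2⟩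
    have := Finset.card_le_card hsub
    omega

lemma eq_of_card {n : ℕ} (hn : 3 ≤ n) (lam : Fin n → ℝ)
    (hsum : ∑ i, lam i = 0) (c : ℝ)
    (hc : n - 1 ≤ (Finset.univ.filter fun i => lam i = c).card) :
    (∑ i, lam i ^ 3) ^ 2 = ((n : ℝ) - 2) ^ 2 / (n * (n - 1)) * (∑ i, lam i ^ 2) ^ 3 := by
  have hn' : (3 : ℝ) ≤ (n : ℝ) := by exact_mod_cast hn
  set F := (Finset.univ.filter fun i => lam i = c) with hF
  have hFle : F.card ≤ n := by
    simpa using Finset.card_le_card (Finset.subset_univ F)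
  by_cases hcase : F.card = n
  · have hFuniv : F = univ := Finset.eq_univ_of_card F (by rw [hcase]; simp)
    have hall : ∀ i, lam i = c := by
      intro i
      have : i ∈ F := hFuniv ▸ Finset.mem_univ i
      exact (Finset.mem_filter.mp this).2
    have hc0 : c = 0 := by
      have h1 : ∑ i, lam i = (n : ℝ) * c := by
        rw [Finset.sum_congr rfl (fun i _ => hall i), Finset.sum_const, Finset.card_univ,
          Fintype.card_fin, nsmul_eq_mul]
      rw [hsum] at h1
      rcases mul_eq_zero.mp h1.symm with h' | h'
      · exact absurd h' (by positivity : (0:ℝ) < (n:ℝ)).ne'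
      · exact h'
    have hz : ∀ i, lam i = 0 := fun i => by rw [hall i, hc0]
    have e3 : ∑ i, lam i ^ 3 = 0 := by simp [hz]
    have e2 : ∑ i, lam i ^ 2 = 0 := by simp [hz]
    rw [e2, e3]; ring
  · have hcard : F.card = n - 1 := by omega
    have hcompl : Fᶜ.card = 1 := by
      rw [Finset.card_compl, hcard, Fintype.card_fin]; omega
    obtain ⟨i₀, hi₀⟩ := Finset.card_eq_one.mp hcompl
    have hmem : ∀ i, i ≠ i₀ → lam i = c := by
      intro i hi
      by_contra hne
      have hiF : i ∈ Fᶜ := by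
        rw [Finset.mem_compl, hF, Finset.mem_filter]
        push_neg
        intro _; exact hne
      rw [hi₀, Finset.mem_singleton] at hiF
      exact hi hiF
    have hcarderase : ((univ.erase i₀).card : ℝ) = (n : ℝ) - 1 := by
      rw [Finset.card_erase_of_mem (mem_univ i₀), Finset.card_univ, Fintype.card_fin,
        Nat.cast_sub (by omega), Nat.cast_one]
    have hlam0 : lam i₀ = -((n : ℝ) - 1) * c := by
      have h1 : lam i₀ + ∑ j ∈ univ.erase i₀, lam j = 0 := by
        rw [Finset.add_sum_erase univ lam (mem_univ i₀)]; exact hsum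
      have h2 : ∑ j ∈ univ.erase i₀, lam j = ((n : ℝ) - 1) * c := by
        rw [Finset.sum_congr rfl (fun j hj => hmem j (Finset.mem_erase.mp hj).1),
          Finset.sum_const, nsmul_eq_mul, hcarderase]
      rw [h2] at h1; linarith
    have hQ : ∑ i, lam i ^ 2 = (n : ℝ) * ((n : ℝ) - 1) * c ^ 2 := by
      rw [← Finset.add_sum_erase univ (fun i => lam i ^ 2) (mem_univ i₀),
        Finset.sum_congr rfl (fun j hj => by rw [hmem j (Finset.mem_erase.mp hj).1]),
        Finset.sum_const, nsmul_eq_mul, hcarderase, hlam0]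
      ring
    have hP : ∑ i, lam i ^ 3 = (((n : ℝ) - 1) - ((n : ℝ) - 1) ^ 3) * c ^ 3 := by
      rw [← Finset.add_sum_erase univ (fun i => lam i ^ 3) (mem_univ i₀),
        Finset.sum_congr rfl (fun j hj => by rw [hmem j (Finset.mem_erase.mp hj).1]),
        Finset.sum_const, nsmul_eq_mul, hcarderase, hlam0]
      ring
    rw [hP, hQ]
    have hne : (n : ℝ) * ((n : ℝ) - 1) ≠ 0 := ne_of_gt (by nlinarith)
    field_simp
    ring

theorem power_sum_cube_sq_le (n : ℕ) (hn : 3 ≤ n) (lam : Fin n → ℝ)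
    (hsum : ∑ i, lam i = 0) :
    (∑ i, lam i ^ 3) ^ 2 ≤ ((n : ℝ) - 2) ^ 2 / (n * (n - 1)) * (∑ i, lam i ^ 2) ^ 3 ∧
      ((∑ i, lam i ^ 3) ^ 2 = ((n : ℝ) - 2) ^ 2 / (n * (n - 1)) * (∑ i, lam i ^ 2) ^ 3 ↔
        ∃ c : ℝ, n - 1 ≤ (Finset.univ.filter fun i => lam i = c).card) := by
  have hn' : (3 : ℝ) ≤ (n : ℝ) := by exact_mod_cast hn
  set Q := ∑ i, lam i ^ 2 with hQdef
  set P := ∑ i, lam i ^ 3 with hPdef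
  have hQ0 : 0 ≤ Q := Finset.sum_nonneg fun i _ => sq_nonneg _
  have hDpos : (0 : ℝ) < (n : ℝ) * ((n : ℝ) - 1) := by nlinarith
  set a := Real.sqrt (Q / ((n : ℝ) * ((n : ℝ) - 1))) with hadef
  have ha : 0 ≤ a := Real.sqrt_nonneg _
  have ha2 : a ^ 2 * ((n : ℝ) * ((n : ℝ) - 1)) = Q := by
    rw [hadef, Real.sq_sqrt (by positivity)]
    field_simp
    exact mul_div_cancel_right₀ Q (by linarith)
  -- apply key lemmas to lam
  have hA : 0 ≤ P + ((n : ℝ) - 2) * a * Q := by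
    rw [← key_identity hn lam hsum a ha2]
    exact Finset.sum_nonneg fun i _ => key_nonneg hn lam hsum a ha ha2 i
  -- apply key lemmas to -lam
  have hsum' : ∑ i, (fun i => -lam i) i = 0 := by simpa using hsum
  have hQ' : ∑ i, (fun i => -lam i) i ^ 2 = Q := by simp [hQdef]
  have ha2' : a ^ 2 * ((n : ℝ) * ((n : ℝ) - 1)) = ∑ i, (fun i => -lam i) i ^ 2 := by
    rw [hQ']; exact ha2
  have hP' : ∑ i, (fun i => -lam i) i ^ 3 = -P := by
    simp only [hPdef]
    rw [← Finset.sum_neg_distrib]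
    exact Finset.sum_congr rfl fun i _ => by ring
  have hB : 0 ≤ -P + ((n : ℝ) - 2) * a * Q := by
    have := key_identity hn (fun i => -lam i) hsum' a ha2'
    rw [hP', hQ'] at this
    rw [← this]
    exact Finset.sum_nonneg fun i _ => key_nonneg hn (fun i => -lam i) hsum' a ha ha2' i
  have hRHS : ((n : ℝ) - 2) ^ 2 / ((n : ℝ) * ((n : ℝ) - 1)) * Q ^ 3
      = (((n : ℝ) - 2) * a * Q) ^ 2 := by
    rw [← ha2]
    field_simp
  constructor
  · rw [hRHS]
    exact sq_le_sq' (by linarith) (by linarith)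
  · constructor
    · intro he
      rw [hRHS] at he
      have hfac : (P - ((n : ℝ) - 2) * a * Q) * (P + ((n : ℝ) - 2) * a * Q) = 0 := by
        linear_combination he
      rcases mul_eq_zero.mp hfac with hcase | hcase
      · -- P = (n-2) a Q : equality for -lam
        have hzero : ∑ i, ((fun i => -lam i) i - a) ^ 2 * ((fun i => -lam i) i + ((n : ℝ) - 1) * a) = 0 := by
          rw [key_identity hn (fun i => -lam i) hsum' a ha2', hP', hQ']
          linarith
        have heach := (Finset.sum_eq_zero_iff_of_nonneg
          (fun i _ => key_nonneg hn (fun i => -lam i) hsum' a ha ha2' i)).mp hzero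
        apply count_lemma hn lam hsum (-a)
        intro i
        have hi := heach i (Finset.mem_univ i)
        rcases mul_eq_zero.mp hi with h' | h'
        · left
          have := pow_eq_zero_iff (n := 2) (by norm_num) |>.mp h'
          linarith
        · right
          nlinarith [h']
      · -- P = -(n-2) a Q : equality for lam
        have hzero : ∑ i, (lam i - a) ^ 2 * (lam i + ((n : ℝ) - 1) * a) = 0 := by
          rw [key_identity hn lam hsum a ha2]
          linarith
        have heach := (Finset.sum_eq_zero_iff_of_nonneg
          (fun i _ => key_nonneg hn lam hsum a ha ha2 i)).mp hzero
        apply count_lemma hn lam hsum a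
        intro i
        have hi := heach i (Finset.mem_univ i)
        rcases mul_eq_zero.mp hi with h' | h'
        · left
          have := pow_eq_zero_iff (n := 2) (by norm_num) |>.mp h'
          linarith
        · right
          linarith
    · rintro ⟨c, hc⟩
      exact eq_of_card hn lam hsum c hc
end

section
/- Let n ≥ 3 and let λ₁, …, λₙ be real numbers with λ₁ + ⋯ + λₙ = 0. Writing pₖ = σₖ(λ)/C(n,k), one has p₂² − t·p₃ − t²·p₂ ≥ 0 for every real number t; moreover, if λ is not identically zero, then equality holds for some t if and only if at least n − 1 of the numbers λ₁, …, λₙ are equal to one another. -/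
open Finset
set_option maxHeartbeats 1000000

lemma aux_aeval_esymm {n : ℕ} (k : ℕ) (lam : Fin n → ℝ) :
    MvPolynomial.aeval lam (MvPolynomial.esymm (Fin n) ℝ k) = esymm k lam := by
  simp [MvPolynomial.esymm, esymm, map_sum, map_prod]

lemma aux_esymm_one {n : ℕ} (lam : Fin n → ℝ) : esymm 1 lam = ∑ i, lam i := by
  rw [← aux_aeval_esymm]; simp [MvPolynomial.esymm_one]

lemma aux_anti2 : (Finset.HasAntidiagonal.antidiagonal 2).filter (fun a => a.1 ∈ Set.Ioo 0 2) = {(1,1)} := by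
  simp only [Set.mem_Ioo]; decide

lemma aux_anti3 :
    (Finset.HasAntidiagonal.antidiagonal 3).filter (fun a => a.1 ∈ Set.Ioo 0 3) = {(1,2),(2,1)} := by
  simp only [Set.mem_Ioo]; decide

lemma aux_esymm_two {n : ℕ} (lam : Fin n → ℝ) (hsum : ∑ i, lam i = 0) :
    esymm 2 lam = -(∑ i, lam i ^ 2) / 2 := by
  have h := congrArg (MvPolynomial.aeval lam)
    (MvPolynomial.psum_eq_mul_esymm_sub_sum (Fin n) ℝ 2 (by norm_num))
  rw [aux_anti2] at h
  simp only [map_sub, map_add, map_mul, map_sum, map_pow, map_natCast, map_neg, map_one,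
    MvPolynomial.psum, MvPolynomial.aeval_X, aux_aeval_esymm, aux_esymm_one, hsum,
    Finset.sum_singleton, pow_one] at h
  rw [h]; ring

lemma aux_esymm_three {n : ℕ} (lam : Fin n → ℝ) (hsum : ∑ i, lam i = 0) :
    esymm 3 lam = (∑ i, lam i ^ 3) / 3 := by
  have h := congrArg (MvPolynomial.aeval lam)
    (MvPolynomial.psum_eq_mul_esymm_sub_sum (Fin n) ℝ 3 (by norm_num))
  rw [aux_anti3] at h
  simp only [map_sub, map_add, map_mul, map_sum, map_pow, map_natCast, map_neg, map_one,
    MvPolynomial.psum, MvPolynomial.aeval_X, aux_aeval_esymm, aux_esymm_one, hsum,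
    Finset.sum_insert (by decide : ((1:ℕ),(2:ℕ)) ∉ ({(2,1)} : Finset (ℕ×ℕ))),
    Finset.sum_singleton, pow_one] at h
  rw [h]; ring

lemma aux_cast_choose_three {n : ℕ} (hn : 3 ≤ n) :
    ((n.choose 3 : ℕ) : ℝ) = (n:ℝ)*((n:ℝ)-1)*((n:ℝ)-2)/6 := by
  obtain ⟨m, rfl⟩ : ∃ m, n = m + 3 := ⟨n - 3, by omega⟩
  have h := Nat.choose_mul_factorial_mul_factorial (show 3 ≤ m + 3 by omega)
  have h3 : Nat.factorial 3 = 6 := by decide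
  have hm : m + 3 - 3 = m := by omega
  rw [h3, hm] at h
  have hfac : Nat.factorial (m+3) = (m+3) * ((m+2) * ((m+1) * Nat.factorial m)) := by
    simp [show m + 3 = (m+2)+1 from rfl, Nat.factorial_succ]
  rw [hfac] at h
  have : (m+3).choose 3 * 6 = (m+3) * ((m+2) * (m+1)) :=
    Nat.eq_of_mul_eq_mul_right (Nat.factorial_pos m) (by rw [h]; ring)
  have hc : ((m+3).choose 3 : ℝ) * 6 = ((m+3) * ((m+2) * (m+1)) : ℕ) := by
    exact_mod_cast congrArg (Nat.cast (R := ℝ)) this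
  push_cast at hc ⊢
  linarith

/-- pointwise bound: `n * lam i ^ 2 ≤ (n-1) * S2`. -/
lemma aux_bound {n : ℕ} (hn : 3 ≤ n) (lam : Fin n → ℝ) (hsum : ∑ i, lam i = 0) (i : Fin n) :
    (n:ℝ) * lam i ^ 2 ≤ ((n:ℝ) - 1) * ∑ j, lam j ^ 2 := by
  have h := sq_sum_le_card_mul_sum_sq (s := Finset.univ.erase i) (f := lam)
  have h1 : ∑ j ∈ Finset.univ.erase i, lam j = - lam i := by
    rw [Finset.sum_erase_eq_sub (Finset.mem_univ i), hsum]; ring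
  have h2 : ∑ j ∈ Finset.univ.erase i, lam j ^ 2 = (∑ j, lam j ^ 2) - lam i ^ 2 :=
    Finset.sum_erase_eq_sub (Finset.mem_univ i)
  have h3 : ((Finset.univ.erase i).card : ℝ) = (n:ℝ) - 1 := by
    rw [Finset.card_erase_of_mem (Finset.mem_univ i)]
    simp [Fintype.card_fin]
    rw [Nat.cast_sub (by omega)]
    simp
  rw [h1, h2, h3] at h
  nlinarith [h]

/-- the key algebraic identity. -/
lemma aux_identity {n : ℕ} (hn : 3 ≤ n) (lam : Fin n → ℝ) (hsum : ∑ i, lam i = 0)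
    (r : ℝ) (hr2 : (n:ℝ) * r ^ 2 = ((n:ℝ)-1) * ∑ i, lam i ^ 2) :
    ∑ i, (((n:ℝ)-1) * lam i + r)^2 * (r - lam i)
      = ((n:ℝ)-1) * (((n:ℝ)-2) * (∑ i, lam i ^ 2) * r - ((n:ℝ)-1) * ∑ i, lam i ^ 3) := by
  have expand : ∀ i : Fin n, (((n:ℝ)-1) * lam i + r)^2 * (r - lam i)
      = (((n:ℝ)-1)^2 * r - 2*((n:ℝ)-1)*r) * lam i ^ 2
        - ((n:ℝ)-1)^2 * lam i ^ 3
        + (2*((n:ℝ)-1)*r^2 - r^2) * lam i + r^3 := by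
    intro i; ring
  rw [Finset.sum_congr rfl (fun i _ => expand i)]
  simp only [Finset.sum_add_distrib, Finset.sum_sub_distrib, ← Finset.mul_sum, hsum,
    Finset.sum_const, Finset.card_univ, Fintype.card_fin, nsmul_eq_mul, mul_zero]
  have hr3 : (n:ℝ) * r^3 = ((n:ℝ)-1) * (∑ i, lam i ^ 2) * r := by
    have : (n:ℝ) * r^3 = ((n:ℝ) * r^2) * r := by ring
    rw [this, hr2]
  linarith [hr3]

lemma aux_le_r {n : ℕ} (hn : 3 ≤ n) (lam : Fin n → ℝ) (hsum : ∑ i, lam i = 0)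
    (r : ℝ) (hr : 0 ≤ r) (hr2 : (n:ℝ) * r ^ 2 = ((n:ℝ)-1) * ∑ i, lam i ^ 2) (i : Fin n) :
    lam i ≤ r := by
  have hb := aux_bound hn lam hsum i
  have hnpos : (0:ℝ) < n := by
    have : (3:ℝ) ≤ (n:ℝ) := by exact_mod_cast hn
    linarith
  have hsq : lam i ^ 2 ≤ r ^ 2 := by nlinarith [hb, hr2]
  calc lam i ≤ |lam i| := le_abs_self _
    _ = Real.sqrt (lam i ^ 2) := (Real.sqrt_sq_eq_abs _).symm
    _ ≤ Real.sqrt (r ^ 2) := Real.sqrt_le_sqrt hsq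
    _ = r := Real.sqrt_sq hr

lemma aux_one_sided {n : ℕ} (hn : 3 ≤ n) (lam : Fin n → ℝ) (hsum : ∑ i, lam i = 0)
    (r : ℝ) (hr : 0 ≤ r) (hr2 : (n:ℝ) * r ^ 2 = ((n:ℝ)-1) * ∑ i, lam i ^ 2) :
    ((n:ℝ)-1) * (∑ i, lam i ^ 3) ≤ ((n:ℝ)-2) * (∑ i, lam i ^ 2) * r := by
  have hterm : ∀ i ∈ Finset.univ, (0:ℝ) ≤ (((n:ℝ)-1) * lam i + r)^2 * (r - lam i) :=
    fun i _ => mul_nonneg (sq_nonneg _) (by linarith [aux_le_r hn lam hsum r hr hr2 i])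
  have hI := aux_identity hn lam hsum r hr2
  have hpos := Finset.sum_nonneg hterm
  rw [hI] at hpos
  have hn1 : (0:ℝ) < (n:ℝ) - 1 := by
    have : (3:ℝ) ≤ (n:ℝ) := by exact_mod_cast hn
    linarith
  nlinarith [hpos]

lemma aux_equal_case {n : ℕ} (hn : 3 ≤ n) (lam : Fin n → ℝ) (hsum : ∑ i, lam i = 0)
    (hS2 : 0 < ∑ i, lam i ^ 2) (r : ℝ) (hr : 0 ≤ r)
    (hr2 : (n:ℝ) * r ^ 2 = ((n:ℝ)-1) * ∑ i, lam i ^ 2)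
    (heq : ((n:ℝ)-1) * (∑ i, lam i ^ 3) = ((n:ℝ)-2) * (∑ i, lam i ^ 2) * r) :
    ∃ c : ℝ, (Finset.univ.filter fun i => lam i = c).card = n - 1 := by
  classical
  have hn3 : (3:ℝ) ≤ (n:ℝ) := by exact_mod_cast hn
  have hn1 : (0:ℝ) < (n:ℝ) - 1 := by linarith
  have hnpos : (0:ℝ) < (n:ℝ) := by linarith
  have hr2pos : 0 < r ^ 2 := by nlinarith [hr2]
  have hrpos : 0 < r := lt_of_le_of_ne hr (by intro h; rw [← h] at hr2pos; simp at hr2pos)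
  set a : ℝ := -r / ((n:ℝ)-1) with ha
  have ha' : a * ((n:ℝ)-1) + r = 0 := by rw [ha]; field_simp; ring
  have hdich : ∀ i, lam i = a ∨ lam i = r := by
    have hI := aux_identity hn lam hsum r hr2
    have hzero : ∑ i, (((n:ℝ)-1) * lam i + r)^2 * (r - lam i) = 0 := by
      rw [hI, ← heq]; ring
    have hterm : ∀ i ∈ Finset.univ, (0:ℝ) ≤ (((n:ℝ)-1) * lam i + r)^2 * (r - lam i) :=
      fun i _ => mul_nonneg (sq_nonneg _) (by linarith [aux_le_r hn lam hsum r hr hr2 i])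
    have hall := (Finset.sum_eq_zero_iff_of_nonneg hterm).mp hzero
    intro i
    rcases mul_eq_zero.mp (hall i (Finset.mem_univ i)) with h | h
    · left
      have h0 : ((n:ℝ)-1) * lam i + r = 0 := by
        have := sq_eq_zero_iff.mp h; linarith [this]
      rw [ha]; field_simp; linarith
    · right; linarith
  set T := Finset.univ.filter (fun i => lam i = a) with hT
  have hkn : T.card ≤ n := by
    simpa using Finset.card_filter_le Finset.univ (fun i => lam i = a)
  have h1 : ∑ i ∈ T, lam i = (T.card : ℝ) * a := by
    rw [Finset.sum_congr rfl (fun i hi => (Finset.mem_filter.mp hi).2), Finset.sum_const,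
      nsmul_eq_mul]
  have hcardc : ((Finset.univ.filter (fun i => ¬ lam i = a)).card : ℝ) = (n:ℝ) - T.card := by
    have hh := Finset.card_filter_add_card_filter_not (s := Finset.univ)
      (p := fun i => lam i = a)
    simp only [Finset.card_univ, Fintype.card_fin] at hh
    rw [← hT] at hh
    have : (Finset.univ.filter (fun i => ¬ lam i = a)).card = n - T.card := by omega
    rw [this, Nat.cast_sub hkn]
  have h2 : ∑ i ∈ Finset.univ.filter (fun i => ¬ lam i = a), lam i
      = ((n:ℝ) - T.card) * r := by
    rw [Finset.sum_congr rfl (fun i hi => ?_), Finset.sum_const, nsmul_eq_mul, hcardc]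
    exact (hdich i).resolve_left (Finset.mem_filter.mp hi).2
  have hEq : (T.card : ℝ) * a + ((n:ℝ) - T.card) * r = 0 := by
    have hs := Finset.sum_filter_add_sum_filter_not Finset.univ (fun i => lam i = a) lam
    rw [hsum, h1, h2] at hs
    exact hs
  have h' : r * ((n:ℝ)^2 - (n:ℝ) - (T.card:ℝ) * (n:ℝ)) = 0 := by
    linear_combination ((n:ℝ)-1) * hEq - (T.card:ℝ) * ha'
  have h'' : (n:ℝ)^2 - (n:ℝ) - (T.card:ℝ) * (n:ℝ) = 0 :=
    (mul_eq_zero.mp h').resolve_left hrpos.ne'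
  have hk : (T.card : ℝ) = (n:ℝ) - 1 := by
    have hmul : (T.card:ℝ) * (n:ℝ) = ((n:ℝ) - 1) * (n:ℝ) := by linarith
    exact mul_right_cancel₀ hnpos.ne' hmul
  refine ⟨a, ?_⟩
  have : ((T.card : ℕ) : ℝ) = ((n - 1 : ℕ) : ℝ) := by
    rw [hk, Nat.cast_sub (by omega)]; simp
  exact_mod_cast this

theorem p2_sq_sub_quadratic_nonneg (n : ℕ) (hn : 3 ≤ n) (lam : Fin n → ℝ)
    (hsum : ∑ i, lam i = 0) :
    (∀ t : ℝ, 0 ≤ p 2 lam ^ 2 - t * p 3 lam - t ^ 2 * p 2 lam) ∧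
      (lam ≠ 0 →
        ((∃ t : ℝ, p 2 lam ^ 2 - t * p 3 lam - t ^ 2 * p 2 lam = 0) ↔
          ∃ c : ℝ, n - 1 ≤ (Finset.univ.filter fun i => lam i = c).card)) := by
  classical
  have hn3 : (3:ℝ) ≤ (n:ℝ) := by exact_mod_cast hn
  have hnpos : (0:ℝ) < (n:ℝ) := by linarith
  have hn1 : (0:ℝ) < (n:ℝ) - 1 := by linarith
  have hn2 : (0:ℝ) < (n:ℝ) - 2 := by linarith
  set S2 : ℝ := ∑ i, lam i ^ 2 with hS2def
  set S3 : ℝ := ∑ i, lam i ^ 3 with hS3def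
  have hS2nonneg : 0 ≤ S2 := Finset.sum_nonneg fun i _ => sq_nonneg _
  -- p 2 and p 3 formulas
  have hp2 : p 2 lam = -S2 / ((n:ℝ) * ((n:ℝ)-1)) := by
    rw [p, aux_esymm_two lam hsum, Nat.cast_choose_two, ← hS2def]
    rw [div_div_div_comm]
    norm_num
  have hp3 : p 3 lam = 2 * S3 / ((n:ℝ) * ((n:ℝ)-1) * ((n:ℝ)-2)) := by
    rw [p, aux_esymm_three lam hsum, aux_cast_choose_three hn, ← hS3def]
    field_simp
    ring
  -- square root setup
  set r : ℝ := Real.sqrt (((n:ℝ)-1) * S2 / n) with hrdef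
  have hr : 0 ≤ r := Real.sqrt_nonneg _
  have hr2 : (n:ℝ) * r ^ 2 = ((n:ℝ)-1) * S2 := by
    rw [hrdef, Real.sq_sqrt (div_nonneg (mul_nonneg (by linarith) hS2nonneg) (by linarith))]
    field_simp
  -- key inequality
  have hkey : (n:ℝ) * ((n:ℝ)-1) * S3 ^ 2 ≤ ((n:ℝ)-2) ^ 2 * S2 ^ 3 := by
    have h1 := aux_one_sided hn lam hsum r hr hr2
    have e2 : ∑ i, (-lam i) ^ 2 = S2 := by simp [hS2def]
    have e3 : ∑ i, (-lam i) ^ 3 = -S3 := by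
      rw [hS3def, ← Finset.sum_neg_distrib]
      exact Finset.sum_congr rfl fun i _ => by ring
    have h2 := aux_one_sided hn (fun i => -lam i) (by simp [hsum]) r hr (by rw [e2]; exact hr2)
    simp only [e2, e3] at h2
    have hsq : (((n:ℝ)-1) * S3) ^ 2 ≤ (((n:ℝ)-2) * S2 * r) ^ 2 := by
      apply sq_le_sq' <;> nlinarith [h1, h2]
    have h4 : (n:ℝ) * ((((n:ℝ)-1) * S3) ^ 2) ≤ ((n:ℝ)-2)^2 * S2^2 * ((n:ℝ) * r^2) := by
      nlinarith [hsq]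
    rw [hr2] at h4
    refine le_of_mul_le_mul_right ?_ hn1
    linear_combination h4
  -- discriminant representation
  have hrep : p 3 lam ^ 2 + 4 * p 2 lam ^ 3
      = (4 * ((n:ℝ) * ((n:ℝ)-1) * S3 ^ 2 - ((n:ℝ)-2)^2 * S2 ^ 3))
        / ((n:ℝ)^3 * ((n:ℝ)-1)^3 * ((n:ℝ)-2)^2) := by
    rw [hp2, hp3]
    field_simp
    ring
  have hdisc : p 3 lam ^ 2 + 4 * p 2 lam ^ 3 ≤ 0 := by
    rw [hrep]
    apply div_nonpos_of_nonpos_of_nonneg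
    · linarith [hkey]
    · positivity
  -- part 1
  have part1 : ∀ t : ℝ, 0 ≤ p 2 lam ^ 2 - t * p 3 lam - t ^ 2 * p 2 lam := by
    intro t
    rcases eq_or_lt_of_le hS2nonneg with h0 | hS2pos
    · have hz : ∀ i ∈ Finset.univ, lam i ^ 2 = 0 :=
        (Finset.sum_eq_zero_iff_of_nonneg fun i _ => sq_nonneg _).mp h0.symm
      have hS30 : S3 = 0 := Finset.sum_eq_zero fun i _ => by
        have := sq_eq_zero_iff.mp (hz i (Finset.mem_univ i)); rw [this]; ring
      rw [hp2, hp3, ← h0, hS30]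
      simp
    · have hp2neg : 0 < -(p 2 lam) := by
        have : -(p 2 lam) = S2 / ((n:ℝ) * ((n:ℝ)-1)) := by rw [hp2]; ring
        rw [this]; positivity
      nlinarith [sq_nonneg (2 * (-(p 2 lam)) * t - p 3 lam), hdisc, hp2neg]
  refine ⟨part1, fun hlam0 => ?_⟩
  have hS2pos : 0 < S2 := by
    rcases Function.ne_iff.mp hlam0 with ⟨i, hi⟩
    have hi' : lam i ≠ 0 := by simpa using hi
    have h1 : 0 < lam i ^ 2 := pow_two_pos_of_ne_zero hi'
    exact lt_of_lt_of_le h1 (Finset.single_le_sum (fun j _ => sq_nonneg (lam j))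
      (Finset.mem_univ i))
  constructor
  · rintro ⟨t, ht⟩
    have hq : (-(p 2 lam)) * (t*t) + (-(p 3 lam)) * t + (p 2 lam ^ 2) = 0 := by
      linear_combination ht
    have hd := discrim_eq_sq_of_quadratic_eq_zero hq
    rw [discrim] at hd
    have h0 : p 3 lam ^ 2 + 4 * p 2 lam ^ 3 = 0 := by
      have hge : 0 ≤ p 3 lam ^ 2 + 4 * p 2 lam ^ 3 := by
        nlinarith [hd, sq_nonneg (2 * (-(p 2 lam)) * t + -(p 3 lam))]
      linarith [hdisc]
    have hnum : (n:ℝ) * ((n:ℝ)-1) * S3 ^ 2 = ((n:ℝ)-2)^2 * S2 ^ 3 := by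
      rw [hrep] at h0
      have hden : ((n:ℝ)^3 * ((n:ℝ)-1)^3 * ((n:ℝ)-2)^2) ≠ 0 := by positivity
      have := (div_eq_zero_iff.mp h0).resolve_right hden
      linarith
    have hsqeq' : (n:ℝ) * ((((n:ℝ)-1) * S3) ^ 2) = (n:ℝ) * ((((n:ℝ)-2) * S2 * r) ^ 2) := by
      linear_combination ((n:ℝ)-1) * hnum - (((n:ℝ)-2)^2 * S2^2) * hr2
    have hsqeq : (((n:ℝ)-1) * S3) ^ 2 = (((n:ℝ)-2) * S2 * r) ^ 2 :=
      mul_left_cancel₀ hnpos.ne' hsqeq'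
    have hfac : ((((n:ℝ)-1) * S3 - ((n:ℝ)-2) * S2 * r) *
        ((((n:ℝ)-1) * S3 + ((n:ℝ)-2) * S2 * r))) = 0 := by
      linear_combination hsqeq
    rcases mul_eq_zero.mp hfac with h | h
    · obtain ⟨c, hc⟩ := aux_equal_case hn lam hsum hS2pos r hr hr2 (by linarith)
      exact ⟨c, le_of_eq hc.symm⟩
    · have e2 : ∑ i, (-lam i) ^ 2 = S2 := by simp [hS2def]
      have e3 : ∑ i, (-lam i) ^ 3 = -S3 := by
        rw [hS3def, ← Finset.sum_neg_distrib]
        exact Finset.sum_congr rfl fun i _ => by ring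
      obtain ⟨c, hc⟩ := aux_equal_case hn (fun i => -lam i) (by simp [hsum])
        (by rw [e2]; exact hS2pos) r hr (by rw [e2]; exact hr2)
        (by rw [e2, e3]; linarith)
      refine ⟨-c, ?_⟩
      have hfe : (Finset.univ.filter fun i => -lam i = c)
          = (Finset.univ.filter fun i => lam i = -c) := by
        apply Finset.filter_congr
        intro i _
        constructor <;> intro h' <;> linarith
      rw [← hfe]
      exact le_of_eq hc.symm
  · rintro ⟨c, hc⟩
    set T := Finset.univ.filter (fun i => lam i = c) with hT
    have hkn : T.card ≤ n := by
      simpa using Finset.card_filter_le Finset.univ (fun i => lam i = c)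
    have hcases : T.card = n - 1 ∨ T.card = n := by omega
    have hTnotall : T.card ≠ n := by
      intro hcn
      have hTuniv : T = Finset.univ := Finset.eq_univ_of_card T (by simp [hcn])
      have hall : ∀ i, lam i = c := fun i => by
        have : i ∈ T := hTuniv ▸ Finset.mem_univ i
        exact (Finset.mem_filter.mp this).2
      have hc0 : c = 0 := by
        have : (n:ℝ) * c = 0 := by
          rw [← hsum]; rw [Finset.sum_congr rfl fun i _ => hall i]
          simp [Finset.card_univ, mul_comm]
        rcases mul_eq_zero.mp this with h | h
        · exact absurd h hnpos.ne'
        · exact h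
      exact hlam0 (funext fun i => by rw [hall i, hc0]; rfl)
    have hTcard : T.card = n - 1 := hcases.resolve_right hTnotall
    have hcompl : (Finset.univ.filter (fun i => ¬ lam i = c)).card = 1 := by
      have hh := Finset.card_filter_add_card_filter_not (s := Finset.univ)
        (p := fun i => lam i = c)
      simp only [Finset.card_univ, Fintype.card_fin] at hh
      rw [← hT] at hh
      omega
    obtain ⟨j, hj⟩ := Finset.card_eq_one.mp hcompl
    have hTcardR : ((T.card : ℕ) : ℝ) = (n:ℝ) - 1 := by
      rw [hTcard, Nat.cast_sub (by omega)]; simp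
    have hsplit : ∀ f : Fin n → ℝ, (∑ i ∈ T, f i) + f j = ∑ i, f i := by
      intro f
      have := Finset.sum_filter_add_sum_filter_not Finset.univ (fun i => lam i = c) f
      rw [hj, Finset.sum_singleton] at this
      exact this
    have hsumT : ∀ (g : ℝ → ℝ), ∑ i ∈ T, g (lam i) = ((n:ℝ) - 1) * g c := by
      intro g
      rw [Finset.sum_congr rfl (fun i hi => by rw [(Finset.mem_filter.mp hi).2]),
        Finset.sum_const, nsmul_eq_mul, hTcardR]
    have hlamj : lam j = -(((n:ℝ)-1) * c) := by
      have h1 := hsplit lam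
      have h2 : ∑ i ∈ T, lam i = ((n:ℝ) - 1) * c := hsumT id
      rw [h2, hsum] at h1
      linarith
    have hS2v : S2 = ((n:ℝ)-1) * c^2 + (((n:ℝ)-1) * c)^2 := by
      have h1 := hsplit (fun i => lam i ^ 2)
      have h2 : ∑ i ∈ T, lam i ^ 2 = ((n:ℝ) - 1) * c^2 := hsumT (fun x => x^2)
      rw [h2, hlamj] at h1
      rw [hS2def, ← h1]; ring
    have hS3v : S3 = ((n:ℝ)-1) * c^3 - (((n:ℝ)-1) * c)^3 := by
      have h1 := hsplit (fun i => lam i ^ 3)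
      have h2 : ∑ i ∈ T, lam i ^ 3 = ((n:ℝ) - 1) * c^3 := hsumT (fun x => x^3)
      rw [h2, hlamj] at h1
      rw [hS3def, ← h1]; ring
    refine ⟨-c, ?_⟩
    rw [hp2, hp3, hS2v, hS3v]
    field_simp
    ring
end
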